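/- arXiv:1007.1834 — 4 statements merged into one kernel-verified Lean document; each statement's English description precedes it below -/
import Mathlib

section
/- Let m ≥ n > d > 0 be integers. Let F̃, G̃ ∈ ℂ[x] with deg F̃ = m and deg G̃ = n, and let A, B ∈ ℂ[x] with deg A ≤ n−d, deg B ≤ m−d, (A,B) ≠ (0,0), A·F̃ + B·G̃ = 0, and suppose the greatest common divisor of F̃ and G̃ has degree at most d. Let v₁, v₂ ∈ ℝ^{m+n−2d+2} be the real and imaginary parts, respectively, of the concatenated coefficient vector of (A,B); let N₁ = N_{d−1}(F̃_Re, G̃_Re) and N₂ = N_{d−1}(F̃_Im, G̃_Im); and let A₁ = [C_m^{n−d}(A_Re) | C_n^{m−d}(B_Re)] and A₂ = [C_m^{n−d}(A_Im) | C_n^{m−d}(B_Im)] (real matrices with m+n−d+1 rows and m+n+2 columns). Then the real block matrix J of size (2(m+n−d+1)+1) × (2(m+n+2) + 2(m+n−2d+2)) given by J = [[0, 0, 2·v₁ᵗ, 2·v₂ᵗ], [A₁, −A₂, N₁, −N₂], [A₂, A₁, N₂, N₁]] has full rank, i.e., rank(J) = 2(m+n−d+1)+1. -/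
open Polynomial

/-- Entry `(i,j)` of the multiplication matrix `C_k^r(P)`: the coefficient of
`x^{r+k-i}` in `x^{k-j}·P`, i.e. `P.coeff (r + j - i)` when `i ≤ r + j` and `0` otherwise. -/
noncomputable def convEntry {K : Type*} [Semiring K] (r : ℕ) (P : K[X]) (i j : ℕ) : K :=
  if i ≤ r + j then P.coeff (r + j - i) else 0

/-- Entry function of the `(d−1)`-th subresultant matrix
`N_{d−1}(F,G) = [C_{n−d}^m(F) | C_{m−d}^n(G)]`, with `m+n−d+1` rows and
`m+n−2d+2` columns. -/
noncomputable def subresEntry {K : Type*} [Semiring K] (m n d : ℕ) (F G : K[X])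
    (i j : ℕ) : K :=
  if j ≤ n - d then convEntry m F i j else convEntry n G i (j - (n - d + 1))

/-- Entry function of the horizontal concatenation `[C_m^{n-d}(A) | C_n^{m-d}(B)]`,
a matrix with `m+n-d+1` rows and `m+n+2` columns. -/
noncomputable def cofactorEntry {K : Type*} [Semiring K] (m n d : ℕ) (A B : K[X])
    (i j : ℕ) : K :=
  if j ≤ m then convEntry (n - d) A i j else convEntry (m - d) B i (j - (m + 1))

/-- The `j`-th entry of the concatenated coefficient vector
`(a_{n−d}, …, a_0, b_{m−d}, …, b_0)` of the pair `(A, B)`. -/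
noncomputable def cofactorVec (m n d : ℕ) (A B : ℂ[X]) (j : ℕ) : ℂ :=
  if j ≤ n - d then A.coeff (n - d - j) else B.coeff (m - d - (j - (n - d + 1)))

/-- The real part of a complex polynomial, taken coefficientwise. -/
noncomputable def rePoly (P : ℂ[X]) : ℝ[X] :=
  Polynomial.ofFinsupp (AddMonoidAlgebra.ofCoeff (P.toFinsupp.coeff.mapRange Complex.re Complex.zero_re))

/-- The imaginary part of a complex polynomial, taken coefficientwise. -/
noncomputable def imPoly (P : ℂ[X]) : ℝ[X] :=
  Polynomial.ofFinsupp (AddMonoidAlgebra.ofCoeff (P.toFinsupp.coeff.mapRange Complex.im Complex.zero_im))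

/-- The Jacobian matrix `J = [[0, 0, 2·v₁ᵗ, 2·v₂ᵗ], [A₁, −A₂, N₁, −N₂], [A₂, A₁, N₂, N₁]]`
of size `(2(m+n−d+1)+1) × (2(m+n+2) + 2(m+n−2d+2))`, where
`v₁`, `v₂` are the real and imaginary parts of the concatenated coefficient vector of
`(A,B)`, `N₁ = N_{d−1}(F_Re, G_Re)`, `N₂ = N_{d−1}(F_Im, G_Im)`,
`A₁ = [C_m^{n−d}(A_Re) | C_n^{m−d}(B_Re)]` and `A₂ = [C_m^{n−d}(A_Im) | C_n^{m−d}(B_Im)]`. -/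
noncomputable def Jmat (m n d : ℕ) (F G A B : ℂ[X]) :
    Matrix (Unit ⊕ Fin (m + n - d + 1) ⊕ Fin (m + n - d + 1))
      ((Fin (m + n + 2) ⊕ Fin (m + n + 2)) ⊕
        (Fin (m + n - 2*d + 2) ⊕ Fin (m + n - 2*d + 2))) ℝ :=
  Matrix.of fun i j =>
    match i, j with
    | Sum.inl _, Sum.inl _ => 0
    | Sum.inl _, Sum.inr (Sum.inl j) => 2 * (cofactorVec m n d A B (j : ℕ)).re
    | Sum.inl _, Sum.inr (Sum.inr j) => 2 * (cofactorVec m n d A B (j : ℕ)).im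
    | Sum.inr (Sum.inl i), Sum.inl (Sum.inl j) =>
        cofactorEntry m n d (rePoly A) (rePoly B) (i : ℕ) (j : ℕ)
    | Sum.inr (Sum.inl i), Sum.inl (Sum.inr j) =>
        -(cofactorEntry m n d (imPoly A) (imPoly B) (i : ℕ) (j : ℕ))
    | Sum.inr (Sum.inl i), Sum.inr (Sum.inl j) =>
        subresEntry m n d (rePoly F) (rePoly G) (i : ℕ) (j : ℕ)
    | Sum.inr (Sum.inl i), Sum.inr (Sum.inr j) =>
        -(subresEntry m n d (imPoly F) (imPoly G) (i : ℕ) (j : ℕ))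
    | Sum.inr (Sum.inr i), Sum.inl (Sum.inl j) =>
        cofactorEntry m n d (imPoly A) (imPoly B) (i : ℕ) (j : ℕ)
    | Sum.inr (Sum.inr i), Sum.inl (Sum.inr j) =>
        cofactorEntry m n d (rePoly A) (rePoly B) (i : ℕ) (j : ℕ)
    | Sum.inr (Sum.inr i), Sum.inr (Sum.inl j) =>
        subresEntry m n d (imPoly F) (imPoly G) (i : ℕ) (j : ℕ)
    | Sum.inr (Sum.inr i), Sum.inr (Sum.inr j) =>
        subresEntry m n d (rePoly F) (rePoly G) (i : ℕ) (j : ℕ)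

/-! ### Auxiliary lemmas -/

lemma rePoly_coeff (P : ℂ[X]) (t : ℕ) : (rePoly P).coeff t = (P.coeff t).re := by
  simp [rePoly, Polynomial.coeff]

lemma imPoly_coeff (P : ℂ[X]) (t : ℕ) : (imPoly P).coeff t = (P.coeff t).im := by
  simp [imPoly, Polynomial.coeff]

lemma convEntry_re (r : ℕ) (P : ℂ[X]) (i j : ℕ) :
    convEntry r (rePoly P) i j = (convEntry r P i j).re := by
  unfold convEntry; split_ifs <;> simp [rePoly_coeff]

lemma convEntry_im (r : ℕ) (P : ℂ[X]) (i j : ℕ) :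
    convEntry r (imPoly P) i j = (convEntry r P i j).im := by
  unfold convEntry; split_ifs <;> simp [imPoly_coeff]

lemma cofactorEntry_re (m n d : ℕ) (A B : ℂ[X]) (i j : ℕ) :
    cofactorEntry m n d (rePoly A) (rePoly B) i j = (cofactorEntry m n d A B i j).re := by
  unfold cofactorEntry; split_ifs <;> simp [convEntry_re]

lemma cofactorEntry_im (m n d : ℕ) (A B : ℂ[X]) (i j : ℕ) :
    cofactorEntry m n d (imPoly A) (imPoly B) i j = (cofactorEntry m n d A B i j).im := by
  unfold cofactorEntry; split_ifs <;> simp [convEntry_im]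

lemma subresEntry_re (m n d : ℕ) (F G : ℂ[X]) (i j : ℕ) :
    subresEntry m n d (rePoly F) (rePoly G) i j = (subresEntry m n d F G i j).re := by
  unfold subresEntry; split_ifs <;> simp [convEntry_re]

lemma subresEntry_im (m n d : ℕ) (F G : ℂ[X]) (i j : ℕ) :
    subresEntry m n d (imPoly F) (imPoly G) i j = (subresEntry m n d F G i j).im := by
  unfold subresEntry; split_ifs <;> simp [convEntry_im]

lemma cofactorEntry_left {m n d : ℕ} {A B : ℂ[X]} {i j : ℕ} (hj : j ≤ m) :
    cofactorEntry m n d A B i j = convEntry (n - d) A i j := by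
  unfold cofactorEntry; rw [if_pos hj]

lemma cofactorEntry_right {m n d : ℕ} {A B : ℂ[X]} {i j : ℕ} (hj : ¬ (j ≤ m)) :
    cofactorEntry m n d A B i j = convEntry (m - d) B i (j - (m + 1)) := by
  unfold cofactorEntry; rw [if_neg hj]

lemma subresEntry_left {m n d : ℕ} {F G : ℂ[X]} {i j : ℕ} (hj : j ≤ n - d) :
    subresEntry m n d F G i j = convEntry m F i j := by
  unfold subresEntry; rw [if_pos hj]

lemma subresEntry_right {m n d : ℕ} {F G : ℂ[X]} {i j : ℕ} (hj : ¬ (j ≤ n - d)) :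
    subresEntry m n d F G i j = convEntry n G i (j - (n - d + 1)) := by
  unfold subresEntry; rw [if_neg hj]

/-! ### The linear functional `phi` -/

noncomputable def phi (N : ℕ) (μ : Fin (N+1) → ℂ) : ℂ[X] →ₗ[ℂ] ℂ :=
  ∑ i : Fin (N+1), μ i • Polynomial.lcoeff ℂ (N - i)

lemma phi_apply (N : ℕ) (μ : Fin (N+1) → ℂ) (P : ℂ[X]) :
    phi N μ P = ∑ i : Fin (N+1), μ i * P.coeff (N - i) := by
  simp [phi, LinearMap.sum_apply, Polynomial.lcoeff_apply, smul_eq_mul]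

lemma phi_X_pow (N : ℕ) (μ : Fin (N+1) → ℂ) (i : Fin (N+1)) :
    phi N μ (X ^ (N - (i:ℕ))) = μ i := by
  rw [phi_apply, Finset.sum_eq_single i]
  · rw [Polynomial.coeff_X_pow, if_pos rfl, mul_one]
  · intro b _ hb
    rw [Polynomial.coeff_X_pow, if_neg, mul_zero]
    have hb' : (b:ℕ) ≤ N := Nat.lt_succ_iff.mp b.isLt
    have hi : (i:ℕ) ≤ N := Nat.lt_succ_iff.mp i.isLt
    intro hEq
    exact hb (Fin.ext (by omega))
  · intro h; exact absurd (Finset.mem_univ i) h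

lemma sum_mul_convEntry {N : ℕ} (μ : Fin (N+1) → ℂ) (r jj : ℕ) (h : r + jj ≤ N) (P : ℂ[X]) :
    ∑ i : Fin (N+1), μ i * convEntry r P (i : ℕ) jj = phi N μ (P * X ^ (N - r - jj)) := by
  rw [phi_apply]
  refine Finset.sum_congr rfl fun i _ => ?_
  have hi : (i : ℕ) ≤ N := Nat.lt_succ_iff.mp i.isLt
  congr 1
  rw [Polynomial.coeff_mul_X_pow']
  unfold convEntry
  split_ifs with h1 h2 h2
  · congr 1; omega
  · omega
  · omega
  · rfl

lemma phi_mul_expand (N mm : ℕ) (μ : Fin (N+1) → ℂ) (P U : ℂ[X])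
    (hU : U.natDegree ≤ mm) :
    phi N μ (U * P) = ∑ k ∈ Finset.range (mm+1), U.coeff k * phi N μ (P * X ^ k) := by
  have hUs := Polynomial.as_sum_range' U (mm+1) (Nat.lt_succ_of_le hU)
  have h1 : U * P = ∑ k ∈ Finset.range (mm+1), (U.coeff k) • (P * X ^ k) := by
    conv_lhs => rw [hUs]
    rw [Finset.sum_mul]
    refine Finset.sum_congr rfl fun k _ => ?_
    rw [Polynomial.smul_eq_C_mul, ← Polynomial.C_mul_X_pow_eq_monomial]
    ring
  rw [h1, map_sum]
  exact Finset.sum_congr rfl fun k _ => by rw [map_smul, smul_eq_mul]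

lemma phi_mul_of (N mm : ℕ) (μ : Fin (N+1) → ℂ) (A : ℂ[X])
    (hphiA : ∀ k ≤ mm, phi N μ (A * X ^ k) = 0)
    (U : ℂ[X]) (hU : U.natDegree ≤ mm) : phi N μ (U * A) = 0 := by
  rw [phi_mul_expand N mm μ A U hU]
  refine Finset.sum_eq_zero fun k hk => ?_
  rw [hphiA k (Nat.lt_succ_iff.mp (Finset.mem_range.mp hk)), mul_zero]

lemma mu_eq_zero (N mm nn : ℕ) (μ : Fin (N+1) → ℂ) (A B : ℂ[X])
    (hphiA : ∀ k ≤ mm, phi N μ (A * X ^ k) = 0)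
    (hphiB : ∀ k ≤ nn, phi N μ (B * X ^ k) = 0)
    (hdecomp : ∀ W : ℂ[X], W.natDegree ≤ N →
      ∃ U V : ℂ[X], U.natDegree ≤ mm ∧ V.natDegree ≤ nn ∧ W = U * A + V * B) :
    ∀ i, μ i = 0 := by
  intro i
  have hX : ((X : ℂ[X]) ^ (N - (i:ℕ))).natDegree ≤ N := by
    rw [Polynomial.natDegree_X_pow]; omega
  obtain ⟨U, V, hUd, hVd, hW⟩ := hdecomp _ hX
  rw [← phi_X_pow N μ i, hW, map_add, phi_mul_of N mm μ A hphiA U hUd,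
    phi_mul_of N nn μ B hphiB V hVd, add_zero]

/-! ### Combining real and imaginary equations -/

lemma sum_split_combine {R : ℕ} (lam1 lam2 : Fin R → ℝ) (z : Fin R → ℂ) (w : ℂ)
    (h1 : w.re + ((∑ i, lam1 i * (z i).re) + ∑ i, lam2 i * (z i).im) = 0)
    (h2 : w.im + ((∑ i, lam1 i * (-((z i).im))) + ∑ i, lam2 i * (z i).re) = 0) :
    ∑ i, (((lam1 i : ℝ) : ℂ) - Complex.I * ((lam2 i : ℝ) : ℂ)) * z i
      = -((starRingEnd ℂ) w) := by
  have hre : (∑ i, (((lam1 i : ℝ) : ℂ) - Complex.I * ((lam2 i : ℝ) : ℂ)) * z i).re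
      = (∑ i, lam1 i * (z i).re) + ∑ i, lam2 i * (z i).im := by
    rw [Complex.re_sum, ← Finset.sum_add_distrib]
    refine Finset.sum_congr rfl fun i _ => ?_
    simp only [Complex.mul_re, Complex.sub_re, Complex.sub_im, Complex.mul_im,
      Complex.ofReal_re, Complex.ofReal_im, Complex.I_re, Complex.I_im]
    ring
  have him : (∑ i, (((lam1 i : ℝ) : ℂ) - Complex.I * ((lam2 i : ℝ) : ℂ)) * z i).im
      = (∑ i, lam1 i * (z i).im) - ∑ i, lam2 i * (z i).re := by
    rw [Complex.im_sum]
    rw [show (∑ i, lam1 i * (z i).im) - ∑ i, lam2 i * (z i).re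
      = ∑ i, (lam1 i * (z i).im - lam2 i * (z i).re) by rw [Finset.sum_sub_distrib]]
    refine Finset.sum_congr rfl fun i _ => ?_
    simp only [Complex.mul_re, Complex.sub_re, Complex.sub_im, Complex.mul_im,
      Complex.ofReal_re, Complex.ofReal_im, Complex.I_re, Complex.I_im]
    ring
  apply Complex.ext
  · rw [hre]; simp only [Complex.neg_re, Complex.conj_re]; linarith
  · rw [him]
    simp only [Complex.neg_im, Complex.conj_im, neg_neg]
    have h3 : ∑ i, lam1 i * (-((z i).im)) = -∑ i, lam1 i * (z i).im := by
      rw [← Finset.sum_neg_distrib]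
      exact Finset.sum_congr rfl fun i _ => by ring
    rw [h3] at h2
    linarith

/-! ### Algebraic structure lemmas -/

lemma coprime_and_deg (m n d : ℕ) (hmn : n ≤ m) (hdn : d < n) (hd : 0 < d)
    (F G A B : ℂ[X])
    (hF : F.degree = (m : WithBot ℕ)) (hG : G.degree = (n : WithBot ℕ))
    (hA : A.degree ≤ ((n - d : ℕ) : WithBot ℕ)) (hB : B.degree ≤ ((m - d : ℕ) : WithBot ℕ))
    (hAB : ¬(A = 0 ∧ B = 0)) (hsyz : A * F + B * G = 0)
    (hgcd : (gcd F G).degree ≤ (d : WithBot ℕ)) :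
    IsCoprime A B ∧ B ≠ 0 ∧ B.natDegree = m - d := by
  have hdm : d ≤ m := le_trans (le_of_lt hdn) hmn
  have hF0 : F ≠ 0 := fun h => by simp [h] at hF
  have hG0 : G ≠ 0 := fun h => by simp [h] at hG
  have hB0 : B ≠ 0 := by
    rintro rfl
    have h2 : A * F = 0 := by linear_combination hsyz
    rcases mul_eq_zero.mp h2 with h | h
    · exact hAB ⟨h, rfl⟩
    · exact absurd h hF0
  have hg0 : gcd F G ≠ 0 := fun h => by
    have := gcd_dvd_left F G
    rw [h] at this
    exact hF0 (zero_dvd_iff.mp this)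
  obtain ⟨F₁, hF₁⟩ := gcd_dvd_left F G
  obtain ⟨G₁, hG₁⟩ := gcd_dvd_right F G
  have hF₁0 : F₁ ≠ 0 := fun h => hF0 (by rw [hF₁, h, mul_zero])
  have hG₁0 : G₁ ≠ 0 := fun h => hG0 (by rw [hG₁, h, mul_zero])
  have key := gcd_mul_left (gcd F G) F₁ G₁
  rw [← hF₁, ← hG₁] at key
  have hng : (normalize (gcd F G) : ℂ[X]) ≠ 0 := by simpa using hg0
  have hgcd10 : gcd F₁ G₁ ≠ 0 := by
    intro h; rw [h, mul_zero] at key; exact hg0 key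
  have hdeg1 : (gcd F G).natDegree = (normalize (gcd F G)).natDegree + (gcd F₁ G₁).natDegree := by
    conv_lhs => rw [key]
    exact Polynomial.natDegree_mul hng hgcd10
  have hdegnorm : (normalize (gcd F G)).natDegree = (gcd F G).natDegree := by
    simp [Polynomial.natDegree, Polynomial.degree_normalize]
  have hgcd1deg : (gcd F₁ G₁).natDegree = 0 := by omega
  have hcopFG : IsCoprime F₁ G₁ := by
    rw [← gcd_isUnit_iff]
    have h2 := Polynomial.eq_C_of_natDegree_eq_zero hgcd1deg
    rw [h2]
    refine Polynomial.isUnit_C.mpr (Ne.isUnit ?_)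
    intro h; rw [h, map_zero] at h2; exact hgcd10 h2
  have hsyz1 : A * F₁ + B * G₁ = 0 := by
    have h2 : gcd F G * (A * F₁ + B * G₁) = 0 := by
      calc gcd F G * (A * F₁ + B * G₁) = A * (gcd F G * F₁) + B * (gcd F G * G₁) := by ring
        _ = A * F + B * G := by rw [← hF₁, ← hG₁]
        _ = 0 := hsyz
    rcases mul_eq_zero.mp h2 with h | h
    · exact absurd h hg0
    · exact h
  have hdvd : F₁ ∣ B := by
    refine hcopFG.dvd_of_dvd_mul_right ?_
    exact ⟨-A, by linear_combination hsyz1⟩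
  have hgd : (gcd F G).natDegree ≤ d := Polynomial.natDegree_le_iff_degree_le.mpr hgcd
  have hFdeg : F.natDegree = m := Polynomial.natDegree_eq_of_degree_eq_some hF
  have hGdeg : G.natDegree = n := Polynomial.natDegree_eq_of_degree_eq_some hG
  have hFsplit : m = (gcd F G).natDegree + F₁.natDegree := by
    rw [← hFdeg]; conv_lhs => rw [hF₁]
    exact Polynomial.natDegree_mul hg0 hF₁0
  have hGsplit : n = (gcd F G).natDegree + G₁.natDegree := by
    rw [← hGdeg]; conv_lhs => rw [hG₁]
    exact Polynomial.natDegree_mul hg0 hG₁0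
  have hBdeg : B.natDegree ≤ m - d := Polynomial.natDegree_le_iff_degree_le.mpr hB
  have hF₁B : F₁.natDegree ≤ B.natDegree := Polynomial.natDegree_le_of_dvd hdvd hB0
  have hBdegeq : B.natDegree = m - d := by omega
  obtain ⟨c, hc⟩ := hdvd
  have hc0 : c ≠ 0 := fun h => hB0 (by rw [hc, h, mul_zero])
  have hcdeg : c.natDegree = 0 := by
    have h2 := Polynomial.natDegree_mul hF₁0 hc0
    rw [← hc] at h2
    omega
  have hcunit : IsUnit c := by
    have h2 := Polynomial.eq_C_of_natDegree_eq_zero hcdeg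
    rw [h2]
    refine Polynomial.isUnit_C.mpr (Ne.isUnit ?_)
    intro h; rw [h, map_zero] at h2; exact hc0 h2
  have hAeq : A = -(G₁ * c) := by
    have h2 : F₁ * (A + G₁ * c) = 0 := by
      rw [hc] at hsyz1; linear_combination hsyz1
    rcases mul_eq_zero.mp h2 with h | h
    · exact absurd h hF₁0
    · linear_combination h
  have hcop : IsCoprime A B := by
    rw [hAeq, hc]
    exact ((isCoprime_mul_unit_right hcunit G₁ F₁).mpr hcopFG.symm).neg_left
  exact ⟨hcop, hB0, hBdegeq⟩

lemma decomp_lemma (m n d : ℕ) (hdm : d ≤ m) (hdn : d ≤ n) (A B : ℂ[X])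
    (hcop : IsCoprime A B) (hB0 : B ≠ 0) (hBdeg : B.natDegree = m - d)
    (hA : A.natDegree ≤ n - d) (W : ℂ[X]) (hW : W.natDegree ≤ m + n - d) :
    ∃ U V : ℂ[X], U.natDegree ≤ m ∧ V.natDegree ≤ n ∧ W = U * A + V * B := by
  obtain ⟨u, v, huv⟩ := hcop
  have hmonic : (B * C B.leadingCoeff⁻¹).Monic := Polynomial.monic_mul_leadingCoeff_inv hB0
  set B' := B * C B.leadingCoeff⁻¹ with hB'
  set U := (W * u) %ₘ B' with hU
  set q := (W * u) /ₘ B' with hq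
  have hmod : U + B' * q = W * u := Polynomial.modByMonic_add_div (W * u) B'
  have hB'deg : B'.degree = B.degree := Polynomial.degree_mul_leadingCoeff_inv B hB0
  have hUdeg : U.degree < B.degree := hB'deg ▸ Polynomial.degree_modByMonic_lt (W * u) hmonic
  have hBdeg' : B.degree = ((m - d : ℕ) : WithBot ℕ) := by
    rw [Polynomial.degree_eq_natDegree hB0, hBdeg]
  have hUnat : U.natDegree ≤ m - d := by
    rw [Polynomial.natDegree_le_iff_degree_le]
    rw [hBdeg'] at hUdeg
    exact le_of_lt hUdeg
  set V := W * v + C B.leadingCoeff⁻¹ * q * A with hV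
  have hrep : W = U * A + V * B := by
    rw [hV, hB'] at *
    linear_combination (-W) * huv + (-A) * hmod
  refine ⟨U, V, by omega, ?_, hrep⟩
  by_cases hV0 : V = 0
  · rw [hV0]; simp
  · have hVB : V * B = W - U * A := by linear_combination -hrep
    have h1 : (V * B).natDegree = V.natDegree + (m - d) := by
      rw [Polynomial.natDegree_mul hV0 hB0, hBdeg]
    have h2 : (W - U * A).natDegree ≤ m + n - d := by
      refine le_trans (Polynomial.natDegree_sub_le W (U * A)) ?_
      have h3 : (U * A).natDegree ≤ (m - d) + (n - d) :=
        le_trans Polynomial.natDegree_mul_le (add_le_add hUnat hA)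
      simp only [sup_le_iff]
      omega
    rw [hVB] at h1
    omega

/-- Let `m ≥ n > d > 0`, let `F, G ∈ ℂ[x]` with `deg F = m`, `deg G = n`, and let
`A, B ∈ ℂ[x]` with `deg A ≤ n−d`, `deg B ≤ m−d`, `(A,B) ≠ (0,0)`, `A·F + B·G = 0`,
and suppose the greatest common divisor of `F` and `G` has degree at most `d`.
Then the Jacobian block matrix `J = [[0, 0, 2·v₁ᵗ, 2·v₂ᵗ], [A₁, −A₂, N₁, −N₂],
[A₂, A₁, N₂, N₁]]` has full rank `2(m+n−d+1)+1`. -/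

theorem jacobian_full_rank (m n d : ℕ) (hmn : n ≤ m) (hdn : d < n) (hd : 0 < d)
    (F G A B : ℂ[X])
    (hF : F.degree = (m : WithBot ℕ)) (hG : G.degree = (n : WithBot ℕ))
    (hA : A.degree ≤ ((n - d : ℕ) : WithBot ℕ)) (hB : B.degree ≤ ((m - d : ℕ) : WithBot ℕ))
    (hAB : ¬(A = 0 ∧ B = 0)) (hsyz : A * F + B * G = 0)
    (hgcd : (gcd F G).degree ≤ (d : WithBot ℕ)) :
    (Jmat m n d F G A B).rank = 2 * (m + n - d + 1) + 1 := by
  classical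
  have hdm : d ≤ m := le_trans (le_of_lt hdn) hmn
  have hdn' : d ≤ n := le_of_lt hdn
  obtain ⟨hcop, hB0, hBdeg⟩ :=
    coprime_and_deg m n d hmn hdn hd F G A B hF hG hA hB hAB hsyz hgcd
  have hAnat : A.natDegree ≤ n - d := Polynomial.natDegree_le_iff_degree_le.mpr hA
  have hBnat : B.natDegree ≤ m - d := Polynomial.natDegree_le_iff_degree_le.mpr hB
  have hli : LinearIndependent ℝ (Jmat m n d F G A B) := by
    refine Fintype.linearIndependent_iff.mpr ?_
    intro g hg
    set lam1 : Fin (m+n-d+1) → ℝ := fun i => g (Sum.inr (Sum.inl i)) with hlam1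
    set lam2 : Fin (m+n-d+1) → ℝ := fun i => g (Sum.inr (Sum.inr i)) with hlam2
    set c0 : ℝ := g (Sum.inl ()) with hc0
    set μ : Fin (m+n-d+1) → ℂ :=
      fun i => ((lam1 i : ℝ) : ℂ) - Complex.I * ((lam2 i : ℝ) : ℂ) with hμ
    have hcol : ∀ c, c0 * Jmat m n d F G A B (Sum.inl ()) c
        + ((∑ i, lam1 i * Jmat m n d F G A B (Sum.inr (Sum.inl i)) c)
          + ∑ i, lam2 i * Jmat m n d F G A B (Sum.inr (Sum.inr i)) c) = 0 := by
      intro c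
      have h := congrFun hg c
      simp only [Finset.sum_apply, Pi.zero_apply, Pi.smul_apply, smul_eq_mul,
        Fintype.sum_sum_type, Finset.univ_unique, Finset.sum_singleton] at h
      exact h
    -- the A-block equations
    have hZA : ∀ j : Fin (m+n+2),
        ∑ i, μ i * cofactorEntry m n d A B (i : ℕ) (j : ℕ) = 0 := by
      intro j
      have h1 := hcol (Sum.inl (Sum.inl j))
      have h2 := hcol (Sum.inl (Sum.inr j))
      simp only [Jmat, Matrix.of_apply, mul_zero, zero_add, cofactorEntry_re,
        cofactorEntry_im] at h1 h2
      have := sum_split_combine lam1 lam2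
        (fun i => cofactorEntry m n d A B (i : ℕ) (j : ℕ)) 0
        (by simpa using h1) (by simpa [mul_neg, neg_mul] using h2)
      simpa using this
    -- the N-block equations
    have hZN : ∀ j : Fin (m+n-2*d+2),
        ∑ i, μ i * subresEntry m n d F G (i : ℕ) (j : ℕ)
          = -((starRingEnd ℂ) (((2 * c0 : ℝ) : ℂ) * cofactorVec m n d A B (j : ℕ))) := by
      intro j
      have h1 := hcol (Sum.inr (Sum.inl j))
      have h2 := hcol (Sum.inr (Sum.inr j))
      simp only [Jmat, Matrix.of_apply, subresEntry_re, subresEntry_im] at h1 h2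
      refine sum_split_combine lam1 lam2
        (fun i => subresEntry m n d F G (i : ℕ) (j : ℕ)) _ ?_ ?_
      · have hw : (((2 * c0 : ℝ) : ℂ) * cofactorVec m n d A B (j : ℕ)).re
            = 2 * c0 * (cofactorVec m n d A B (j : ℕ)).re := by
          simp [Complex.mul_re]
        rw [hw]
        linear_combination h1
      · have hw : (((2 * c0 : ℝ) : ℂ) * cofactorVec m n d A B (j : ℕ)).im
            = 2 * c0 * (cofactorVec m n d A B (j : ℕ)).im := by
          simp [Complex.mul_im]
        rw [hw]
        have h2' : c0 * (2 * (cofactorVec m n d A B (j:ℕ)).im)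
            + ((∑ i, lam1 i * (-((subresEntry m n d F G (i:ℕ) (j:ℕ)).im)))
              + ∑ i, lam2 i * (subresEntry m n d F G (i:ℕ) (j:ℕ)).re) = 0 := by
          simpa [mul_neg, neg_mul] using h2
        linear_combination h2'
    -- Claim A : phi kills A * X^k and B * X^k
    have hμA : ∀ k ≤ m, phi (m+n-d) μ (A * X ^ k) = 0 := by
      intro k hk
      have hjlt : m - k < m + n + 2 := by omega
      have h := hZA ⟨m - k, hjlt⟩
      have h' : ∑ i, μ i * convEntry (n - d) A (i : ℕ) (m - k) = 0 := by
        rw [← h]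
        refine Finset.sum_congr rfl fun i _ => ?_
        rw [cofactorEntry_left (show m - k ≤ m by omega)]
      rw [sum_mul_convEntry μ (n - d) (m - k) (by omega)] at h'
      rw [show m + n - d - (n - d) - (m - k) = k by omega] at h'
      exact h'
    have hμB : ∀ k ≤ n, phi (m+n-d) μ (B * X ^ k) = 0 := by
      intro k hk
      have hjlt : m + 1 + (n - k) < m + n + 2 := by omega
      have h := hZA ⟨m + 1 + (n - k), hjlt⟩
      have h' : ∑ i, μ i * convEntry (m - d) B (i : ℕ) (n - k) = 0 := by
        rw [← h]
        refine Finset.sum_congr rfl fun i _ => ?_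
        rw [cofactorEntry_right (show ¬ (m + 1 + (n - k) ≤ m) by omega)]
        rw [show m + 1 + (n - k) - (m + 1) = n - k by omega]
      rw [sum_mul_convEntry μ (m - d) (n - k) (by omega)] at h'
      rw [show m + n - d - (m - d) - (n - k) = k by omega] at h'
      exact h'
    -- Claim B : phi on F * X^t and G * X^t
    have hμF : ∀ t ≤ n - d, phi (m+n-d) μ (F * X ^ t)
        = -((starRingEnd ℂ) (((2 * c0 : ℝ) : ℂ) * A.coeff t)) := by
      intro t ht
      have hjlt : n - d - t < m + n - 2*d + 2 := by omega
      have h := hZN ⟨n - d - t, hjlt⟩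
      have hv : cofactorVec m n d A B (n - d - t) = A.coeff t := by
        unfold cofactorVec
        rw [if_pos (by omega)]
        congr 1
        omega
      have h' : ∑ i, μ i * convEntry m F (i : ℕ) (n - d - t)
          = -((starRingEnd ℂ) (((2 * c0 : ℝ) : ℂ) * A.coeff t)) := by
        rw [← hv]
        rw [← h]
        refine Finset.sum_congr rfl fun i _ => ?_
        rw [subresEntry_left (show n - d - t ≤ n - d by omega)]
      rw [sum_mul_convEntry μ m (n - d - t) (by omega)] at h'
      rw [show m + n - d - m - (n - d - t) = t by omega] at h'
      exact h'
    have hμG : ∀ t ≤ m - d, phi (m+n-d) μ (G * X ^ t)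
        = -((starRingEnd ℂ) (((2 * c0 : ℝ) : ℂ) * B.coeff t)) := by
      intro t ht
      have hjlt : n - d + 1 + (m - d - t) < m + n - 2*d + 2 := by omega
      have h := hZN ⟨n - d + 1 + (m - d - t), hjlt⟩
      have hv : cofactorVec m n d A B (n - d + 1 + (m - d - t)) = B.coeff t := by
        unfold cofactorVec
        rw [if_neg (by omega)]
        congr 1
        omega
      have h' : ∑ i, μ i * convEntry n G (i : ℕ) (m - d - t)
          = -((starRingEnd ℂ) (((2 * c0 : ℝ) : ℂ) * B.coeff t)) := by
        rw [← hv, ← h]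
        refine Finset.sum_congr rfl fun i _ => ?_
        rw [subresEntry_right (show ¬ (n - d + 1 + (m - d - t) ≤ n - d) by omega)]
        rw [show n - d + 1 + (m - d - t) - (n - d + 1) = m - d - t by omega]
      rw [sum_mul_convEntry μ n (m - d - t) (by omega)] at h'
      rw [show m + n - d - n - (m - d - t) = t by omega] at h'
      exact h'
    -- c0 = 0
    have hc0zero : c0 = 0 := by
      have hexp : (0 : ℂ)
          = ∑ t ∈ Finset.range (n - d + 1), A.coeff t * phi (m+n-d) μ (F * X ^ t)
            + ∑ t ∈ Finset.range (m - d + 1), B.coeff t * phi (m+n-d) μ (G * X ^ t) := by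
        rw [← phi_mul_expand (m+n-d) (n-d) μ F A hAnat,
          ← phi_mul_expand (m+n-d) (m-d) μ G B hBnat, ← map_add, hsyz, map_zero]
      have hterm1 : ∀ t ∈ Finset.range (n - d + 1),
          A.coeff t * phi (m+n-d) μ (F * X ^ t)
            = -(((2 * c0 : ℝ) : ℂ) * ((Complex.normSq (A.coeff t) : ℝ) : ℂ)) := by
        intro t ht
        rw [hμF t (Nat.lt_succ_iff.mp (Finset.mem_range.mp ht)), map_mul,
          Complex.conj_ofReal]
        calc A.coeff t * -(((2 * c0 : ℝ) : ℂ) * (starRingEnd ℂ) (A.coeff t))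
            = -(((2 * c0 : ℝ) : ℂ) * (A.coeff t * (starRingEnd ℂ) (A.coeff t))) := by ring
          _ = _ := by rw [Complex.mul_conj]
      have hterm2 : ∀ t ∈ Finset.range (m - d + 1),
          B.coeff t * phi (m+n-d) μ (G * X ^ t)
            = -(((2 * c0 : ℝ) : ℂ) * ((Complex.normSq (B.coeff t) : ℝ) : ℂ)) := by
        intro t ht
        rw [hμG t (Nat.lt_succ_iff.mp (Finset.mem_range.mp ht)), map_mul,
          Complex.conj_ofReal]
        calc B.coeff t * -(((2 * c0 : ℝ) : ℂ) * (starRingEnd ℂ) (B.coeff t))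
            = -(((2 * c0 : ℝ) : ℂ) * (B.coeff t * (starRingEnd ℂ) (B.coeff t))) := by ring
          _ = _ := by rw [Complex.mul_conj]
      rw [Finset.sum_congr rfl hterm1, Finset.sum_congr rfl hterm2] at hexp
      set SA : ℝ := ∑ t ∈ Finset.range (n - d + 1), Complex.normSq (A.coeff t) with hSA
      set SB : ℝ := ∑ t ∈ Finset.range (m - d + 1), Complex.normSq (B.coeff t) with hSB
      have hexp2 : (0 : ℂ) = -(((2 * c0 : ℝ) : ℂ) * ((SA + SB : ℝ) : ℂ)) := by
        rw [hexp, hSA, hSB]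
        rw [Finset.sum_neg_distrib, Finset.sum_neg_distrib, ← Finset.mul_sum,
          ← Finset.mul_sum]
        push_cast
        ring
      have hreal : (2 * c0) * (SA + SB) = 0 := by
        have h7 := congrArg Complex.re hexp2
        simp only [Complex.zero_re, Complex.neg_re, ← Complex.ofReal_mul,
          Complex.ofReal_re] at h7
        linarith
      have hSnonneg : ∀ (P : ℂ[X]) (s : Finset ℕ),
          0 ≤ ∑ t ∈ s, Complex.normSq (P.coeff t) :=
        fun P s => Finset.sum_nonneg fun t _ => Complex.normSq_nonneg _
      have hSpos : 0 < SA + SB := by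
        rcases not_and_or.mp hAB with hA0 | hB0'
        · have hmem : A.natDegree ∈ Finset.range (n - d + 1) :=
            Finset.mem_range.mpr (by omega)
          have hpos : 0 < Complex.normSq (A.coeff A.natDegree) := by
            rw [Complex.normSq_pos]
            exact Polynomial.leadingCoeff_ne_zero.mpr hA0
          have h4 : 0 < SA := by
            refine Finset.sum_pos' (fun t _ => Complex.normSq_nonneg _) ⟨_, hmem, hpos⟩
          have h5 := hSnonneg B (Finset.range (m - d + 1))
          rw [hSB]
          linarith [h4, h5]
        · have hmem : B.natDegree ∈ Finset.range (m - d + 1) :=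
            Finset.mem_range.mpr (by omega)
          have hpos : 0 < Complex.normSq (B.coeff B.natDegree) := by
            rw [Complex.normSq_pos]
            exact Polynomial.leadingCoeff_ne_zero.mpr hB0'
          have h4 : 0 < SB :=
            Finset.sum_pos' (fun t _ => Complex.normSq_nonneg _) ⟨_, hmem, hpos⟩
          have h5 := hSnonneg A (Finset.range (n - d + 1))
          rw [hSA]
          linarith [h4, h5]
      have := mul_eq_zero.mp hreal
      rcases this with h | h
      · linarith
      · linarith
    -- μ = 0
    have hμzero : ∀ i, μ i = 0 := by
      refine mu_eq_zero (m+n-d) m n μ A B hμA hμB ?_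
      intro W hW
      exact decomp_lemma m n d hdm hdn' A B hcop hB0 hBdeg hAnat W hW
    -- conclude
    intro i
    match i with
    | Sum.inl () => exact hc0zero
    | Sum.inr (Sum.inl i) =>
      have := congrArg Complex.re (hμzero i)
      simpa [hμ, Complex.mul_re] using this
    | Sum.inr (Sum.inr i) =>
      have := congrArg Complex.im (hμzero i)
      simp only [hμ, Complex.sub_im, Complex.ofReal_im, Complex.mul_im, Complex.I_re,
        Complex.I_im, Complex.ofReal_re, Complex.zero_im] at this
      show lam2 i = 0
      linarith [this]
  have hcard : (Jmat m n d F G A B).rank = _ := hli.rank_matrix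
  rw [hcard]
  simp only [Fintype.card_sum, Fintype.card_unit, Fintype.card_fin]
  omega
end

section
/- Let m ≥ n > 0 and 0 < d ≤ n be integers, and let F̃, G̃ ∈ ℂ[x] with deg F̃ = m and deg G̃ = n. Suppose A, B ∈ ℂ[x] are relatively prime with deg A ≤ n−d, deg B ≤ m−d, (A,B) ≠ (0,0), and A·F̃ + B·G̃ = 0. Then B divides F̃, and the polynomial H = F̃/B satisfies G̃ = −A·H; in particular H is a common divisor of F̃ and G̃ of degree at least d, so the greatest common divisor of F̃ and G̃ has degree at least d. -/
open Polynomial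

/-- Let `m ≥ n > 0` and `0 < d ≤ n`, and let `F, G ∈ ℂ[x]` with `deg F = m`, `deg G = n`.
Suppose `A, B ∈ ℂ[x]` are relatively prime with `deg A ≤ n−d`, `deg B ≤ m−d`,
`(A,B) ≠ (0,0)`, and `A·F + B·G = 0`.  Then `B` divides `F`, and `H = F/B` satisfies
`G = −A·H`; in particular `H` is a common divisor of `F` and `G` of degree at least `d`,
so the greatest common divisor of `F` and `G` has degree at least `d`. -/
theorem cofactor_syzygy_gcd_degree_ge (m n d : ℕ) (hmn : n ≤ m) (hn : 0 < n)
    (hd : 0 < d) (hdn : d ≤ n)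
    (F G A B : ℂ[X]) (hF : F.degree = (m : WithBot ℕ)) (hG : G.degree = (n : WithBot ℕ))
    (hcop : IsCoprime A B)
    (hA : A.degree ≤ ((n - d : ℕ) : WithBot ℕ)) (hB : B.degree ≤ ((m - d : ℕ) : WithBot ℕ))
    (hAB : ¬(A = 0 ∧ B = 0)) (hsyz : A * F + B * G = 0) :
    B ∣ F ∧ G = -(A * (F / B)) ∧ (F / B) ∣ F ∧ (F / B) ∣ G ∧
      (d : WithBot ℕ) ≤ (F / B).degree ∧ (d : WithBot ℕ) ≤ (gcd F G).degree := by
  have hF0 : F ≠ 0 := fun h => by simp [h] at hF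
  have hBG : B * G = -(A * F) := by linear_combination hsyz
  have hB0 : B ≠ 0 := by
    intro hb
    rcases (by simpa [hb] using hsyz : A = 0 ∨ F = 0) with ha | hf
    · exact hAB ⟨ha, hb⟩
    · exact hF0 hf
  have hdvd : B ∣ F := by
    have : B ∣ A * F := ⟨-G, by linear_combination hsyz⟩
    exact hcop.symm.dvd_of_dvd_mul_left this
  have hFBH : B * (F / B) = F := EuclideanDomain.mul_div_cancel' hB0 hdvd
  set H := F / B with hH
  have hG' : G = -(A * H) := by
    have : B * G = B * (-(A * H)) := by
      rw [hBG, ← hFBH]; ring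
    exact mul_left_cancel₀ hB0 this
  have hHF : H ∣ F := ⟨B, by rw [← hFBH]; ring⟩
  have hHG : H ∣ G := ⟨-A, by rw [hG']; ring⟩
  have hH0 : H ≠ 0 := fun h => hF0 (by rw [← hFBH, h, mul_zero])
  have hdegF : B.natDegree + H.natDegree = m := by
    have := Polynomial.natDegree_mul hB0 hH0
    rw [hFBH] at this
    have hm : F.natDegree = m := natDegree_eq_of_degree_eq_some hF
    omega
  have hBn : B.natDegree ≤ m - d := by
    have := Polynomial.natDegree_le_iff_degree_le.2 hB
    exact this
  have hdm : d ≤ m := hdn.trans hmn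
  have hHd : d ≤ H.natDegree := by omega
  have hdegH : (d : WithBot ℕ) ≤ H.degree := by
    rw [degree_eq_natDegree hH0]
    exact_mod_cast hHd
  have hgcd0 : gcd F G ≠ 0 := fun h => hF0 ((gcd_eq_zero_iff F G).1 h).1
  have hHgcd : H ∣ gcd F G := dvd_gcd hHF hHG
  exact ⟨hdvd, hG', hHF, hHG, hdegH,
    hdegH.trans (degree_le_of_dvd hHgcd hgcd0)⟩
end

section
/- Let m ≥ n > 0 and 0 < d ≤ n be integers, and let F, G ∈ ℂ[x] with deg F = m and deg G = n. Then the (d−1)-th subresultant matrix N_{d−1}(F,G) has nontrivial kernel if and only if the greatest common divisor of F and G has degree at least d. -/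
open Polynomial

/-- The `(d−1)`-th subresultant matrix `N_{d−1}(F,G) = [C_{n−d}^m(F) | C_{m−d}^n(G)]`,
an `(m+n−d+1) × (m+n−2d+2)` matrix. -/
noncomputable def subresMat {K : Type*} [Semiring K] (m n d : ℕ) (F G : K[X]) :
    Matrix (Fin (m + n - d + 1)) (Fin (m + n - 2*d + 2)) K :=
  Matrix.of fun i j => subresEntry m n d F G (i : ℕ) (j : ℕ)

/-! ### Auxiliary definitions and lemmas -/

/-- Extend a vector on `Fin N` to `ℕ` by zero. -/
noncomputable def vext {N : ℕ} (v : Fin N → ℂ) (k : ℕ) : ℂ :=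
  if h : k < N then v ⟨k, h⟩ else 0

/-- The polynomial `A` encoded by the first block of coordinates of `v`. -/
noncomputable def Apoly (m n d : ℕ) (v : Fin (m + n - 2*d + 2) → ℂ) : ℂ[X] :=
  ∑ j ∈ Finset.range (n - d + 1), C (vext v j) * X ^ (n - d - j)

/-- The polynomial `B` encoded by the second block of coordinates of `v`. -/
noncomputable def Bpoly (m n d : ℕ) (v : Fin (m + n - 2*d + 2) → ℂ) : ℂ[X] :=
  ∑ j ∈ Finset.range (m - d + 1), C (vext v (n - d + 1 + j)) * X ^ (m - d - j)

lemma Apoly_natDegree_le (m n d : ℕ) (v : Fin (m + n - 2*d + 2) → ℂ) :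
    (Apoly m n d v).natDegree ≤ n - d := by
  refine natDegree_sum_le_of_forall_le _ _ fun j hj => ?_
  refine (natDegree_mul_le).trans ?_
  simp only [natDegree_C, natDegree_X_pow, zero_add]
  omega

lemma Bpoly_natDegree_le (m n d : ℕ) (v : Fin (m + n - 2*d + 2) → ℂ) :
    (Bpoly m n d v).natDegree ≤ m - d := by
  refine natDegree_sum_le_of_forall_le _ _ fun j hj => ?_
  refine (natDegree_mul_le).trans ?_
  simp only [natDegree_C, natDegree_X_pow, zero_add]
  omega

lemma Apoly_coeff (m n d : ℕ) (v : Fin (m + n - 2*d + 2) → ℂ) (j : ℕ) (hj : j ≤ n - d) :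
    (Apoly m n d v).coeff (n - d - j) = vext v j := by
  rw [Apoly, finset_sum_coeff]
  rw [Finset.sum_eq_single j]
  · simp [coeff_C_mul, coeff_X_pow]
  · intro b hb hbj
    simp only [Finset.mem_range] at hb
    rw [coeff_C_mul, coeff_X_pow, if_neg (by omega), mul_zero]
  · intro h
    exact absurd (Finset.mem_range.2 (by omega)) h

lemma Bpoly_coeff (m n d : ℕ) (v : Fin (m + n - 2*d + 2) → ℂ) (j : ℕ) (hj : j ≤ m - d) :
    (Bpoly m n d v).coeff (m - d - j) = vext v (n - d + 1 + j) := by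
  rw [Bpoly, finset_sum_coeff]
  rw [Finset.sum_eq_single j]
  · simp [coeff_C_mul, coeff_X_pow]
  · intro b hb hbj
    simp only [Finset.mem_range] at hb
    rw [coeff_C_mul, coeff_X_pow, if_neg (by omega), mul_zero]
  · intro h
    exact absurd (Finset.mem_range.2 (by omega)) h

/-- The matrix–vector product computes the coefficients of `A·F + B·G`. -/
lemma subres_mulVec_apply (m n d : ℕ) (hdn : d ≤ n) (hnm : n ≤ m) (F G : ℂ[X])
    (v : Fin (m + n - 2*d + 2) → ℂ) (i : Fin (m + n - d + 1)) :
    (subresMat m n d F G).mulVec v i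
      = (Apoly m n d v * F + Bpoly m n d v * G).coeff (m + n - d - i) := by
  have hi : (i : ℕ) ≤ m + n - d := by omega
  have hN : m + n - 2*d + 2 = (n - d + 1) + (m - d + 1) := by omega
  have lhs1 : (subresMat m n d F G).mulVec v i
      = ∑ k ∈ Finset.range (m + n - 2*d + 2), subresEntry m n d F G i k * vext v k := by
    calc (subresMat m n d F G).mulVec v i
        = ∑ j : Fin (m + n - 2*d + 2), subresEntry m n d F G (i : ℕ) (j : ℕ) * vext v (j : ℕ) := by
          simp only [Matrix.mulVec, dotProduct, subresMat, Matrix.of_apply]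
          exact Finset.sum_congr rfl fun j _ => by simp [vext, j.isLt]
      _ = ∑ k ∈ Finset.range (m + n - 2*d + 2), subresEntry m n d F G (i : ℕ) k * vext v k :=
          Fin.sum_univ_eq_sum_range (fun k => subresEntry m n d F G (i : ℕ) k * vext v k) _
  have key : ∀ (f : ℕ → ℂ), ∑ k ∈ Finset.range (m + n - 2*d + 2), f k
      = ∑ k ∈ Finset.range (n - d + 1), f k
        + ∑ k ∈ Finset.range (m - d + 1), f (n - d + 1 + k) := by
    intro f
    rw [hN, Finset.sum_range_add]
  rw [lhs1, key]
  have hAF : (Apoly m n d v * F).coeff (m + n - d - i)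
      = ∑ j ∈ Finset.range (n - d + 1),
          vext v j * (if n - d - j ≤ m + n - d - i then F.coeff (m + n - d - i - (n - d - j)) else 0) := by
    rw [Apoly, Finset.sum_mul, finset_sum_coeff]
    refine Finset.sum_congr rfl fun j hj => ?_
    rw [mul_assoc, X_pow_mul, coeff_C_mul, coeff_mul_X_pow']
  have hBG : (Bpoly m n d v * G).coeff (m + n - d - i)
      = ∑ j ∈ Finset.range (m - d + 1),
          vext v (n - d + 1 + j) * (if m - d - j ≤ m + n - d - i then G.coeff (m + n - d - i - (m - d - j)) else 0) := by
    rw [Bpoly, Finset.sum_mul, finset_sum_coeff]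
    refine Finset.sum_congr rfl fun j hj => ?_
    rw [mul_assoc, X_pow_mul, coeff_C_mul, coeff_mul_X_pow']
  rw [coeff_add, hAF, hBG]
  congr 1
  · refine Finset.sum_congr rfl fun j hj => ?_
    simp only [Finset.mem_range] at hj
    rw [subresEntry, if_pos (by omega), convEntry, mul_comm]
    congr 1
    split_ifs with h1 h2 h2
    · congr 1; omega
    · omega
    · omega
    · rfl
  · refine Finset.sum_congr rfl fun j hj => ?_
    simp only [Finset.mem_range] at hj
    rw [subresEntry, if_neg (by omega), convEntry, mul_comm]
    have : n - d + 1 + j - (n - d + 1) = j := by omega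
    rw [this]
    congr 1
    split_ifs with h1 h2 h2
    · congr 1; omega
    · omega
    · omega
    · rfl

/-- Polynomial characterization: a nontrivial syzygy of bounded degrees exists iff
the gcd has degree at least `d`. -/
lemma subres_poly_iff (m n d : ℕ) (hmn : n ≤ m) (hdn : d ≤ n)
    (F G : ℂ[X]) (hF : F.natDegree = m) (hG : G.natDegree = n)
    (hF0 : F ≠ 0) (hG0 : G ≠ 0) :
    (∃ A B : ℂ[X], ¬(A = 0 ∧ B = 0) ∧ A.natDegree ≤ n - d ∧ B.natDegree ≤ m - d ∧
        A * F + B * G = 0)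
      ↔ d ≤ (gcd F G).natDegree := by
  set g := gcd F G with hgdef
  have hg0 : g ≠ 0 := fun h => hF0 ((gcd_eq_zero_iff F G).1 h).1
  constructor
  · rintro ⟨A, B, hAB, hA, hB, heq⟩
    have hA0 : A ≠ 0 := by
      rintro rfl
      simp only [zero_mul, zero_add, mul_eq_zero] at heq
      rcases heq with h | h
      · exact hAB ⟨rfl, h⟩
      · exact hG0 h
    have hAF0 : A * F ≠ 0 := mul_ne_zero hA0 hF0
    have hFd : F ∣ A * F := Dvd.intro_left A rfl
    have hGd : G ∣ A * F := by
      have h1 : A * F = -(B * G) := by linear_combination heq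
      rw [h1]
      exact (dvd_neg).2 (Dvd.intro_left B rfl)
    have hlcm : lcm F G ∣ A * F := lcm_dvd hFd hGd
    have hlcm0 : lcm F G ≠ 0 := fun h => by
      rcases (lcm_eq_zero_iff F G).1 h with h | h
      exacts [hF0 h, hG0 h]
    have h1 : (lcm F G).natDegree ≤ (A * F).natDegree := natDegree_le_of_dvd hlcm hAF0
    have h2 : (A * F).natDegree = A.natDegree + m := by rw [natDegree_mul hA0 hF0, hF]
    have h3 : g.natDegree + (lcm F G).natDegree = m + n := by
      rw [← natDegree_mul hg0 hlcm0]
      rw [natDegree_eq_of_degree_eq (degree_eq_degree_of_associated (gcd_mul_lcm F G)),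
        natDegree_mul hF0 hG0, hF, hG]
    omega
  · intro hdeg
    obtain ⟨F₁, hF₁⟩ := gcd_dvd_left F G
    obtain ⟨G₁, hG₁⟩ := gcd_dvd_right F G
    have hG₁0 : G₁ ≠ 0 := by rintro rfl; rw [mul_zero] at hG₁; exact hG0 hG₁
    have hF₁0 : F₁ ≠ 0 := by rintro rfl; rw [mul_zero] at hF₁; exact hF0 hF₁
    refine ⟨G₁, -F₁, fun h => hG₁0 h.1, ?_, ?_, ?_⟩
    · have : n = g.natDegree + G₁.natDegree := by
        rw [← hG]
        conv_lhs => rw [hG₁]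
        rw [natDegree_mul hg0 hG₁0]
      omega
    · rw [natDegree_neg]
      have : m = g.natDegree + F₁.natDegree := by
        rw [← hF]
        conv_lhs => rw [hF₁]
        rw [natDegree_mul hg0 hF₁0]
      omega
    · linear_combination G₁ * hF₁ - F₁ * hG₁

/-- Let `m ≥ n > 0` and `0 < d ≤ n`, and let `F, G ∈ ℂ[x]` with `deg F = m` and
`deg G = n`.  Then the `(d−1)`-th subresultant matrix `N_{d−1}(F,G)` has nontrivial
kernel if and only if the greatest common divisor of `F` and `G` has degree at least `d`. -/
theorem subresMat_kernel_nontrivial_iff (m n d : ℕ) (hmn : n ≤ m) (hn : 0 < n)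
    (hd : 0 < d) (hdn : d ≤ n)
    (F G : ℂ[X]) (hF : F.degree = (m : WithBot ℕ)) (hG : G.degree = (n : WithBot ℕ)) :
    (∃ v : Fin (m + n - 2*d + 2) → ℂ, v ≠ 0 ∧ (subresMat m n d F G).mulVec v = 0)
      ↔ (d : WithBot ℕ) ≤ (gcd F G).degree := by
  have hF0 : F ≠ 0 := fun h => by simp [h] at hF
  have hG0 : G ≠ 0 := fun h => by simp [h] at hG
  have hFn : F.natDegree = m := natDegree_eq_of_degree_eq_some hF
  have hGn : G.natDegree = n := natDegree_eq_of_degree_eq_some hG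
  have hg0 : gcd F G ≠ 0 := fun h => hF0 ((gcd_eq_zero_iff F G).1 h).1
  have hrhs : ((d : WithBot ℕ) ≤ (gcd F G).degree) ↔ d ≤ (gcd F G).natDegree := by
    rw [degree_eq_natDegree hg0]
    exact_mod_cast Iff.rfl
  rw [hrhs, ← subres_poly_iff m n d hmn hdn F G hFn hGn hF0 hG0]
  constructor
  · rintro ⟨v, hv, hmv⟩
    refine ⟨Apoly m n d v, Bpoly m n d v, ?_, Apoly_natDegree_le m n d v,
      Bpoly_natDegree_le m n d v, ?_⟩
    · rintro ⟨hA, hB⟩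
      apply hv
      funext k
      have hk := k.isLt
      show v k = 0
      by_cases hkc : (k : ℕ) ≤ n - d
      · have h1 : vext v (k : ℕ) = v k := by simp [vext, k.isLt]
        rw [← h1, ← Apoly_coeff m n d v (k : ℕ) hkc, hA, coeff_zero]
      · set j : ℕ := (k : ℕ) - (n - d + 1) with hj
        have hjm : j ≤ m - d := by omega
        have hkj : (n - d + 1) + j = (k : ℕ) := by omega
        have h1 : vext v (n - d + 1 + j) = v k := by
          rw [hkj]; simp [vext, k.isLt]
        rw [← h1, ← Bpoly_coeff m n d v j hjm, hB, coeff_zero]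
    · have hcoeff : ∀ i : Fin (m + n - d + 1),
          (Apoly m n d v * F + Bpoly m n d v * G).coeff (m + n - d - i) = 0 := by
        intro i
        rw [← subres_mulVec_apply m n d hdn hmn F G v i, hmv]
        rfl
      have hdeg : (Apoly m n d v * F + Bpoly m n d v * G).natDegree ≤ m + n - d := by
        refine (natDegree_add_le _ _).trans (max_le ?_ ?_)
        · refine (natDegree_mul_le).trans ?_
          have := Apoly_natDegree_le m n d v
          omega
        · refine (natDegree_mul_le).trans ?_
          have := Bpoly_natDegree_le m n d v
          omega
      ext k
      rw [coeff_zero]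
      by_cases hk : k ≤ m + n - d
      · have h1 := hcoeff ⟨m + n - d - k, by omega⟩
        have h2 : m + n - d - (m + n - d - k) = k := by omega
        rwa [h2] at h1
      · exact coeff_eq_zero_of_natDegree_lt (by omega)
  · rintro ⟨A, B, hAB, hA, hB, heq⟩
    set v : Fin (m + n - 2*d + 2) → ℂ := fun k =>
      if (k : ℕ) ≤ n - d then A.coeff (n - d - (k : ℕ))
      else B.coeff (m - d - ((k : ℕ) - (n - d + 1))) with hvdef
    have hv1 : ∀ j, j ≤ n - d → vext v j = A.coeff (n - d - j) := by
      intro j hj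
      rw [vext, dif_pos (by omega : j < m + n - 2*d + 2)]
      simp only [hvdef]
      rw [if_pos hj]
    have hv2 : ∀ j, j ≤ m - d → vext v (n - d + 1 + j) = B.coeff (m - d - j) := by
      intro j hj
      rw [vext, dif_pos (by omega : n - d + 1 + j < m + n - 2*d + 2)]
      simp only [hvdef]
      rw [if_neg (by omega)]
      congr 1
      omega
    have hAeq : Apoly m n d v = A := by
      rw [Apoly]
      have step1 : ∑ j ∈ Finset.range (n - d + 1), C (vext v j) * X ^ (n - d - j)
          = ∑ j ∈ Finset.range (n - d + 1),
              (fun k => C (A.coeff k) * X ^ k) ((n - d + 1) - 1 - j) := by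
        refine Finset.sum_congr rfl fun j hj => ?_
        simp only [Finset.mem_range] at hj
        rw [hv1 j (by omega)]
        have : (n - d + 1) - 1 - j = n - d - j := by omega
        rw [this]
      rw [step1, Finset.sum_range_reflect (fun k => C (A.coeff k) * X ^ k) (n - d + 1)]
      conv_rhs => rw [A.as_sum_range' (n - d + 1) (by omega)]
      exact Finset.sum_congr rfl fun j _ => C_mul_X_pow_eq_monomial
    have hBeq : Bpoly m n d v = B := by
      rw [Bpoly]
      have step1 : ∑ j ∈ Finset.range (m - d + 1), C (vext v (n - d + 1 + j)) * X ^ (m - d - j)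
          = ∑ j ∈ Finset.range (m - d + 1),
              (fun k => C (B.coeff k) * X ^ k) ((m - d + 1) - 1 - j) := by
        refine Finset.sum_congr rfl fun j hj => ?_
        simp only [Finset.mem_range] at hj
        rw [hv2 j (by omega)]
        have : (m - d + 1) - 1 - j = m - d - j := by omega
        rw [this]
      rw [step1, Finset.sum_range_reflect (fun k => C (B.coeff k) * X ^ k) (m - d + 1)]
      conv_rhs => rw [B.as_sum_range' (m - d + 1) (by omega)]
      exact Finset.sum_congr rfl fun j _ => C_mul_X_pow_eq_monomial
    refine ⟨v, ?_, ?_⟩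
    · intro h0
      have hz : ∀ k : ℕ, vext v k = 0 := by
        intro k
        rw [vext]
        split
        · rw [h0]; rfl
        · rfl
      by_cases hA0 : A = 0
      · have hB0 : B ≠ 0 := fun h => hAB ⟨hA0, h⟩
        have hk : B.natDegree ≤ m - d := hB
        have h1 := hv2 (m - d - B.natDegree) (by omega)
        rw [hz] at h1
        have h2 : m - d - (m - d - B.natDegree) = B.natDegree := by omega
        rw [h2] at h1
        exact (Polynomial.leadingCoeff_ne_zero.mpr hB0) h1.symm
      · have hk : A.natDegree ≤ n - d := hA
        have h1 := hv1 (n - d - A.natDegree) (by omega)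
        rw [hz] at h1
        have h2 : n - d - (n - d - A.natDegree) = A.natDegree := by omega
        rw [h2] at h1
        exact (Polynomial.leadingCoeff_ne_zero.mpr hA0) h1.symm
    · funext i
      rw [subres_mulVec_apply m n d hdn hmn F G v i, hAeq, hBeq, heq, coeff_zero]
      rfl
end

section
/- Let m ≥ n > 0 and 0 < d ≤ n be integers, and let F, G ∈ ℂ[x] with deg F = m and deg G = n. If the greatest common divisor of F and G has degree exactly d, then the kernel of the (d−1)-th subresultant matrix N_{d−1}(F,G) has dimension exactly 1 over ℂ. -/
open Polynomial

section Aux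

variable {K : Type*} [CommRing K]

/-- auxiliary: the polynomial with coefficients `w 0, w 1, ..., w e` from top degree down. -/
noncomputable def polyOf (e : ℕ) (w : ℕ → K) : K[X] :=
  ∑ j ∈ Finset.range (e + 1), monomial (e - j) (w j)

lemma coeff_polyOf (e : ℕ) (w : ℕ → K) (k : ℕ) :
    (polyOf e w).coeff k = if k ≤ e then w (e - k) else 0 := by
  unfold polyOf
  rw [finset_sum_coeff]
  simp only [coeff_monomial]
  by_cases hk : k ≤ e
  · rw [if_pos hk, Finset.sum_eq_single (e - k)]
    · rw [if_pos (by omega)]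
    · intro j hj hne
      rw [if_neg]
      simp only [Finset.mem_range] at hj
      omega
    · intro h; exact absurd (Finset.mem_range.2 (by omega)) h
  · rw [if_neg hk]
    apply Finset.sum_eq_zero
    intro j hj
    simp only [Finset.mem_range] at hj
    rw [if_neg (by omega)]

lemma natDegree_polyOf_le (e : ℕ) (w : ℕ → K) : (polyOf e w).natDegree ≤ e := by
  apply natDegree_le_iff_coeff_eq_zero.2
  intro k hk
  rw [coeff_polyOf, if_neg (by omega)]

lemma polyOf_coeff_self (e : ℕ) (p : K[X]) (hp : p.natDegree ≤ e) :
    polyOf e (fun j => p.coeff (e - j)) = p := by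
  ext k
  rw [coeff_polyOf]
  by_cases hk : k ≤ e
  · rw [if_pos hk]
    congr 1
    omega
  · rw [if_neg hk]
    exact (coeff_eq_zero_of_natDegree_lt (by omega)).symm

lemma polyOf_congr (e : ℕ) {w w' : ℕ → K} (h : ∀ j ≤ e, w j = w' j) :
    polyOf e w = polyOf e w' :=
  Finset.sum_congr rfl fun j hj => by
    rw [h j (by simpa using Nat.lt_succ_iff.1 (Finset.mem_range.1 hj))]

lemma polyOf_smul (e : ℕ) (c : K) (w : ℕ → K) :
    polyOf e (fun j => c * w j) = C c * polyOf e w := by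
  unfold polyOf
  rw [Finset.mul_sum]
  exact Finset.sum_congr rfl fun j _ => by rw [C_mul_monomial]

lemma coeff_polyOf_mul (e : ℕ) (w : ℕ → K) (p : K[X]) (k : ℕ) :
    (polyOf e w * p).coeff k =
      ∑ j ∈ Finset.range (e + 1),
        if e - j ≤ k then w j * p.coeff (k - (e - j)) else 0 := by
  unfold polyOf
  rw [Finset.sum_mul, finset_sum_coeff]
  refine Finset.sum_congr rfl fun j _ => ?_
  rw [show (monomial (e - j) (w j) : K[X]) * p = C (w j) * (p * X ^ (e - j)) by
    rw [← C_mul_X_pow_eq_monomial]; ring]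
  rw [coeff_C_mul, coeff_mul_X_pow', mul_ite, mul_zero]

/-- extension of a `Fin`-indexed vector to `ℕ`. -/
def vextd (m n d : ℕ) (v : Fin (m + n - 2*d + 2) → K) (j : ℕ) : K :=
  if h : j < m + n - 2*d + 2 then v ⟨j, h⟩ else 0

noncomputable def polyA (m n d : ℕ) (v : Fin (m + n - 2*d + 2) → K) : K[X] :=
  polyOf (n - d) (vextd m n d v)

noncomputable def polyB (m n d : ℕ) (v : Fin (m + n - 2*d + 2) → K) : K[X] :=
  polyOf (m - d) (fun j => vextd m n d v (n - d + 1 + j))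

lemma subres_mulVec (m n d : ℕ) (hdn : d ≤ n) (hnm : n ≤ m) (F G : K[X])
    (v : Fin (m + n - 2*d + 2) → K) (i : Fin (m + n - d + 1)) :
    (subresMat m n d F G).mulVec v i =
      (polyA m n d v * F + polyB m n d v * G).coeff (m + n - d - (i : ℕ)) := by
  have hi : (i : ℕ) ≤ m + n - d := by omega
  have hv : ∀ j : Fin (m + n - 2*d + 2), v j = vextd m n d v (j : ℕ) := by
    intro j
    rw [vextd, dif_pos j.isLt]
  rw [coeff_add, polyA, polyB, coeff_polyOf_mul, coeff_polyOf_mul]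
  rw [Matrix.mulVec]
  show ∑ j : Fin (m + n - 2*d + 2), subresMat m n d F G i j * v j = _
  have step1 : ∀ j : Fin (m + n - 2*d + 2),
      subresMat m n d F G i j * v j =
      (fun k => subresEntry m n d F G (i : ℕ) k * vextd m n d v k) (j : ℕ) := by
    intro j
    rw [hv j]
    rfl
  rw [Finset.sum_congr rfl (fun j _ => step1 j),
    Fin.sum_univ_eq_sum_range (fun k => subresEntry m n d F G (i : ℕ) k * vextd m n d v k)
      (m + n - 2*d + 2)]
  have hsplit : Finset.range (m + n - 2*d + 2) = Finset.range ((n - d + 1) + (m - d + 1)) := by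
    congr 1
    omega
  rw [hsplit, Finset.sum_range_add]
  congr 1
  · refine Finset.sum_congr rfl fun j hj => ?_
    rw [Finset.mem_range] at hj
    rw [subresEntry, if_pos (show j ≤ n - d by omega), convEntry]
    by_cases hc : (i : ℕ) ≤ m + j
    · rw [if_pos hc, if_pos (by omega), mul_comm,
        show m + n - d - ↑i - (n - d - j) = m + j - ↑i by omega]
    · rw [if_neg hc, if_neg (by omega), zero_mul]
  · refine Finset.sum_congr rfl fun j hj => ?_
    rw [Finset.mem_range] at hj
    rw [subresEntry, if_neg (show ¬ (n - d + 1 + j ≤ n - d) by omega),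
      show n - d + 1 + j - (n - d + 1) = j by omega, convEntry]
    by_cases hc : (i : ℕ) ≤ n + j
    · rw [if_pos hc, if_pos (by omega), mul_comm,
        show m + n - d - ↑i - (m - d - j) = n + j - ↑i by omega]
    · rw [if_neg hc, if_neg (by omega), zero_mul]

lemma subres_mulVec_zero_iff (m n d : ℕ) (hdn : d ≤ n) (hnm : n ≤ m) (F G : K[X])
    (hFd : F.natDegree ≤ m) (hGd : G.natDegree ≤ n) (v : Fin (m + n - 2*d + 2) → K) :
    (subresMat m n d F G).mulVec v = 0 ↔
      polyA m n d v * F + polyB m n d v * G = 0 := by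
  constructor
  · intro h
    apply Polynomial.ext
    intro k
    rw [coeff_zero]
    by_cases hk : k ≤ m + n - d
    · have := congrFun h ⟨m + n - d - k, by omega⟩
      rw [subres_mulVec m n d hdn hnm] at this
      simpa [show m + n - d - (m + n - d - k) = k by omega] using this
    · apply coeff_eq_zero_of_natDegree_lt
      refine lt_of_le_of_lt ((natDegree_add_le _ _).trans (max_le ?_ ?_))
        (show m + n - d < k by omega)
      · refine natDegree_mul_le.trans ?_
        have hA : (polyA m n d v).natDegree ≤ n - d := natDegree_polyOf_le _ _
        omega
      · refine natDegree_mul_le.trans ?_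
        have hB : (polyB m n d v).natDegree ≤ m - d := natDegree_polyOf_le _ _
        omega
  · intro h
    funext i
    rw [Pi.zero_apply, subres_mulVec m n d hdn hnm, h, coeff_zero]

/-- The distinguished kernel vector, built from the cofactors of the gcd. -/
noncomputable def v0 (m n d : ℕ) (F₁ G₁ : K[X]) : Fin (m + n - 2*d + 2) → K :=
  fun j => if (j : ℕ) ≤ n - d then G₁.coeff (n - d - (j : ℕ))
    else -F₁.coeff (m - d - ((j : ℕ) - (n - d + 1)))

lemma polyA_v0 (m n d : ℕ) (hdn : d ≤ n) (hnm : n ≤ m) (F₁ G₁ : K[X])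
    (hG₁ : G₁.natDegree ≤ n - d) : polyA m n d (v0 m n d F₁ G₁) = G₁ := by
  rw [polyA, polyOf_congr (n - d) (w' := fun j => G₁.coeff (n - d - j)) ?_,
    polyOf_coeff_self _ _ hG₁]
  intro j hj
  rw [vextd, dif_pos (by omega), v0]
  rw [if_pos (by simpa using hj)]

lemma polyB_v0 (m n d : ℕ) (hdn : d ≤ n) (hnm : n ≤ m) (F₁ G₁ : K[X])
    (hF₁ : F₁.natDegree ≤ m - d) : polyB m n d (v0 m n d F₁ G₁) = -F₁ := by
  rw [polyB, polyOf_congr (m - d) (w' := fun j => (-F₁).coeff (m - d - j)) ?_]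
  · exact polyOf_coeff_self _ _ (by simpa using hF₁)
  · intro j hj
    rw [vextd, dif_pos (by omega), v0]
    simp only [Fin.val_mk, coeff_neg]
    rw [if_neg (by omega), show n - d + 1 + j - (n - d + 1) = j from by omega]

lemma polyA_recover (m n d : ℕ) (v : Fin (m + n - 2*d + 2) → K)
    (j : Fin (m + n - 2*d + 2)) (hj : (j : ℕ) ≤ n - d) :
    v j = (polyA m n d v).coeff (n - d - (j : ℕ)) := by
  rw [polyA, coeff_polyOf, if_pos (by omega),
    show n - d - (n - d - (j : ℕ)) = (j : ℕ) by omega, vextd, dif_pos j.isLt]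

lemma polyB_recover (m n d : ℕ) (v : Fin (m + n - 2*d + 2) → K)
    (j : Fin (m + n - 2*d + 2)) (hj : ¬ (j : ℕ) ≤ n - d) :
    v j = (polyB m n d v).coeff (m - d - ((j : ℕ) - (n - d + 1))) := by
  have hj2 : (j : ℕ) < m + n - 2*d + 2 := j.isLt
  rw [polyB, coeff_polyOf, if_pos (by omega),
    show m - d - (m - d - ((j : ℕ) - (n - d + 1))) = (j : ℕ) - (n - d + 1) by omega,
    vextd, dif_pos (by omega)]
  congr 1
  exact Fin.ext (by simp; omega)

lemma polyA_smul (m n d : ℕ) (c : K) (v : Fin (m + n - 2*d + 2) → K) :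
    polyA m n d (c • v) = C c * polyA m n d v := by
  rw [polyA, polyA, ← polyOf_smul]
  refine polyOf_congr _ fun j hj => ?_
  rw [vextd, vextd]
  split
  · simp [Pi.smul_apply, smul_eq_mul]
  · simp

lemma polyB_smul (m n d : ℕ) (c : K) (v : Fin (m + n - 2*d + 2) → K) :
    polyB m n d (c • v) = C c * polyB m n d v := by
  rw [polyB, polyB, ← polyOf_smul]
  refine polyOf_congr _ fun j hj => ?_
  rw [vextd, vextd]
  split
  · simp [Pi.smul_apply, smul_eq_mul]
  · simp

end Aux

/-- Let `m ≥ n > 0` and `0 < d ≤ n`, and let `F, G ∈ ℂ[x]` with `deg F = m` and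
`deg G = n`.  If the greatest common divisor of `F` and `G` has degree exactly `d`,
then the kernel of the `(d−1)`-th subresultant matrix `N_{d−1}(F,G)` has dimension
exactly `1` over `ℂ`. -/
theorem subresMat_kernel_dim_one (m n d : ℕ) (hmn : n ≤ m) (hn : 0 < n)
    (hd : 0 < d) (hdn : d ≤ n)
    (F G : ℂ[X]) (hF : F.degree = (m : WithBot ℕ)) (hG : G.degree = (n : WithBot ℕ))
    (hgcd : (gcd F G).degree = (d : WithBot ℕ)) :
    Module.finrank ℂ (LinearMap.ker (subresMat m n d F G).mulVecLin) = 1 := by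
  classical
  have hF0 : F ≠ 0 := fun h => by simp [h] at hF
  have hG0 : G ≠ 0 := fun h => by simp [h] at hG
  have hFn : F.natDegree = m := natDegree_eq_of_degree_eq_some hF
  have hGn : G.natDegree = n := natDegree_eq_of_degree_eq_some hG
  set H := gcd F G with hH
  have hH0 : H ≠ 0 := fun h => by rw [h] at hgcd; simp at hgcd
  have hHn : H.natDegree = d := natDegree_eq_of_degree_eq_some hgcd
  obtain ⟨F₁, hF1⟩ : H ∣ F := gcd_dvd_left F G
  obtain ⟨G₁, hG1⟩ : H ∣ G := gcd_dvd_right F G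
  have hF10 : F₁ ≠ 0 := by rintro rfl; rw [mul_zero] at hF1; exact hF0 hF1
  have hG10 : G₁ ≠ 0 := by rintro rfl; rw [mul_zero] at hG1; exact hG0 hG1
  have hF1n : F₁.natDegree = m - d := by
    have := natDegree_mul hH0 hF10
    rw [← hF1, hFn, hHn] at this
    omega
  have hG1n : G₁.natDegree = n - d := by
    have := natDegree_mul hH0 hG10
    rw [← hG1, hGn, hHn] at this
    omega
  -- coprimality of the cofactors
  have hcop : IsCoprime F₁ G₁ := by
    rw [← gcd_isUnit_iff]
    have hdF : H * gcd F₁ G₁ ∣ F := by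
      rw [hF1]; exact mul_dvd_mul_left H (gcd_dvd_left F₁ G₁)
    have hdG : H * gcd F₁ G₁ ∣ G := by
      rw [hG1]; exact mul_dvd_mul_left H (gcd_dvd_right F₁ G₁)
    have hdvd : H * gcd F₁ G₁ ∣ H := by
      have := dvd_gcd hdF hdG
      rwa [← hH] at this
    have h1 : H * gcd F₁ G₁ ∣ H * 1 := by rwa [mul_one]
    exact isUnit_of_dvd_one ((mul_dvd_mul_iff_left hH0).1 h1)
  -- kernel = span of v0
  have hker : LinearMap.ker (subresMat m n d F G).mulVecLin
      = Submodule.span ℂ {v0 m n d F₁ G₁} := by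
    ext v
    rw [LinearMap.mem_ker, Matrix.mulVecLin_apply, Submodule.mem_span_singleton,
      subres_mulVec_zero_iff m n d hdn hmn F G (by omega) (by omega) v]
    constructor
    · intro h
      have h1 : polyA m n d v * F₁ + polyB m n d v * G₁ = 0 := by
        have h2 : H * (polyA m n d v * F₁ + polyB m n d v * G₁) = 0 := by
          rw [hF1, hG1] at h
          ring_nf at h ⊢
          linear_combination h
        exact (mul_eq_zero.1 h2).resolve_left hH0
      have hdvd : G₁ ∣ polyA m n d v := by
        refine hcop.symm.dvd_of_dvd_mul_right ⟨-polyB m n d v, ?_⟩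
        linear_combination h1
      obtain ⟨Q, hQ⟩ := hdvd
      by_cases hQ0 : Q = 0
      · -- then polyA v = 0 and polyB v = 0, v = 0
        subst hQ0
        rw [mul_zero] at hQ
        have hB0 : polyB m n d v = 0 := by
          rw [hQ, zero_mul, zero_add] at h1
          exact (mul_eq_zero.1 h1).resolve_right hG10
        refine ⟨0, ?_⟩
        rw [zero_smul]
        funext j
        by_cases hj : (j : ℕ) ≤ n - d
        · rw [Pi.zero_apply, polyA_recover m n d v j hj, hQ, coeff_zero]
        · rw [Pi.zero_apply, polyB_recover m n d v j hj, hB0, coeff_zero]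
      · -- Q is a nonzero constant
        have hAne : polyA m n d v ≠ 0 := by
          rw [hQ]; exact mul_ne_zero hG10 hQ0
        have hdegQ : Q.natDegree = 0 := by
          have h3 : (polyA m n d v).natDegree ≤ n - d := natDegree_polyOf_le _ _
          have h4 := natDegree_mul hG10 hQ0
          rw [← hQ] at h4
          omega
        obtain ⟨c, rfl⟩ := natDegree_eq_zero.1 hdegQ
        have hA : polyA m n d v = C c * G₁ := by rw [hQ]; ring
        have hB : polyB m n d v = C c * (-F₁) := by
          have h5 : G₁ * (C c * F₁ + polyB m n d v) = 0 := by
            rw [hA] at h1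
            linear_combination h1
          have h6 : C c * F₁ + polyB m n d v = 0 :=
            (mul_eq_zero.1 h5).resolve_left hG10
          linear_combination h6
        refine ⟨c, ?_⟩
        funext j
        by_cases hj : (j : ℕ) ≤ n - d
        · rw [Pi.smul_apply, polyA_recover m n d v j hj, hA, coeff_C_mul, v0,
            if_pos hj, smul_eq_mul]
        · rw [Pi.smul_apply, polyB_recover m n d v j hj, hB, coeff_C_mul, v0,
            if_neg hj, smul_eq_mul, coeff_neg]
    · rintro ⟨c, rfl⟩
      rw [polyA_smul, polyB_smul,
        polyA_v0 m n d hdn hmn F₁ G₁ (by omega), polyB_v0 m n d hdn hmn F₁ G₁ (by omega),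
        hF1, hG1]
      ring
  rw [hker]
  refine finrank_span_singleton ?_
  intro hz
  have h0 : (0 : ℕ) < m + n - 2*d + 2 := by omega
  have hlc : G₁.coeff (n - d) ≠ 0 := by
    rw [← hG1n]
    exact leadingCoeff_ne_zero.2 hG10
  have h := congrFun hz ⟨0, h0⟩
  rw [Pi.zero_apply] at h
  exact hlc (by simpa [v0] using h)
end
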